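/- If g : ℝ^d → ℝ is ρ-weakly convex on a convex set X (i.e., x ↦ g(x) + (ρ/2)‖x‖² is convex on X), then for any ν > 0 the composition x ↦ H^ν(g(x)) is ρ-weakly convex on X, where H^ν is the Huber smoothing function. -/
import Mathlib


noncomputable def huber (ν z : ℝ) : ℝ :=
  if z < 0 then 0 else if z ≤ ν then z^2 / (2*ν) else z - ν/2

-- Lower bound: huber is the sup of t*z - ν/2*t² over t ∈ [0,1]
lemma huber_ge {ν : ℝ} (hν : 0 < ν) (z t : ℝ) (ht0 : 0 ≤ t) (ht1 : t ≤ 1) :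
    t * z - ν/2 * t^2 ≤ huber ν z := by
  unfold huber
  split_ifs with h1 h2
  · nlinarith
  · rw [le_div_iff₀ (by linarith : (0:ℝ) < 2*ν)]
    nlinarith [sq_nonneg (z - ν*t)]
  · nlinarith [mul_nonneg (by linarith : (0:ℝ) ≤ 1 - t) (by nlinarith : (0:ℝ) ≤ 2*z - ν*(1+t))]

-- The sup is attained
lemma huber_attained {ν : ℝ} (hν : 0 < ν) (z : ℝ) :
    ∃ t : ℝ, 0 ≤ t ∧ t ≤ 1 ∧ huber ν z = t * z - ν/2 * t^2 := by
  unfold huber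
  split_ifs with h1 h2
  · exact ⟨0, le_refl 0, zero_le_one, by ring⟩
  · refine ⟨z/ν, div_nonneg (not_lt.1 h1) hν.le, by rw [div_le_one hν]; exact h2, ?_⟩
    field_simp
    ring
  · exact ⟨1, zero_le_one, le_refl 1, by ring⟩

lemma normsq_ineq {d : ℕ} (x y : EuclideanSpace ℝ (Fin d)) (a b : ℝ)
    (ha : 0 ≤ a) (hb : 0 ≤ b) (hab : a + b = 1) :
    ‖a • x + b • y‖^2 ≤ a * ‖x‖^2 + b * ‖y‖^2 := by
  have h := norm_add_sq_real (a • x) (b • y)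
  rw [norm_smul, norm_smul, real_inner_smul_left, real_inner_smul_right,
    Real.norm_of_nonneg ha, Real.norm_of_nonneg hb] at h
  have hxy := real_inner_le_norm x y
  nlinarith [mul_nonneg (mul_nonneg ha hb) (sq_nonneg (‖x‖ - ‖y‖)),
    mul_le_mul_of_nonneg_left hxy (by positivity : (0:ℝ) ≤ 2*(a*b))]

theorem huber_comp_weakly_convex {d : ℕ}
    (X : Set (EuclideanSpace ℝ (Fin d))) (g : EuclideanSpace ℝ (Fin d) → ℝ)
    (ρ ν : ℝ) (hρ : 0 ≤ ρ) (hν : 0 < ν)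
    (hg : ConvexOn ℝ X (fun x => g x + ρ/2 * ‖x‖^2)) :
    ConvexOn ℝ X (fun x => huber ν (g x) + ρ/2 * ‖x‖^2) := by
  refine ⟨hg.1, fun x hx y hy a b ha hb hab => ?_⟩
  simp only [smul_eq_mul]
  obtain ⟨t, ht0, ht1, ht⟩ := huber_attained hν (g (a • x + b • y))
  have hφ := hg.2 hx hy ha hb hab
  simp only [smul_eq_mul] at hφ
  have hψ : ‖a • x + b • y‖^2 ≤ a * ‖x‖^2 + b * ‖y‖^2 := normsq_ineq x y a b ha hb hab
  have hhx : t * g x - ν/2 * t^2 ≤ huber ν (g x) := huber_ge hν _ t ht0 ht1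
  have hhy : t * g y - ν/2 * t^2 ≤ huber ν (g y) := huber_ge hν _ t ht0 ht1
  rw [ht]
  have key : t * g (a • x + b • y) ≤ t * (a * g x + b * g y)
      + t * (ρ/2) * (a * ‖x‖^2 + b * ‖y‖^2 - ‖a • x + b • y‖^2) := by
    nlinarith
  have h1t : ρ/2 * ‖a • x + b • y‖^2 ≤ ρ/2 * (a * ‖x‖^2 + b * ‖y‖^2) := by nlinarith
  have habt : (a+b)*(ν/2*t^2) = ν/2*t^2 := by rw [hab]; ring
  nlinarith [mul_le_mul_of_nonneg_left hhx ha, mul_le_mul_of_nonneg_left hhy hb,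
    mul_nonneg (mul_nonneg (by linarith : (0:ℝ) ≤ 1 - t) (div_nonneg hρ two_pos.le))
      (sub_nonneg.2 hψ), habt]
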